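/- Let G be a finite group and x ∈ G an element that is real, i.e. there exists g ∈ G with g⁻¹xg = x⁻¹. Then there exists a 2-element h ∈ G (an element whose order is a power of 2) such that h⁻¹xh = x⁻¹. -/

import Mathlib

/-- If an element `x` of a finite group is real (inverted by some `g ∈ G`),
then it is inverted by some 2-element `h ∈ G`. -/
theorem real_inverted_by_two_element {G : Type*} [Group G] [Finite G] (x : G)
    (hx : ∃ g : G, g⁻¹ * x * g = x⁻¹) :
    ∃ h : G, (∃ k : ℕ, orderOf h = 2 ^ k) ∧ h⁻¹ * x * h = x⁻¹ := by
  obtain ⟨g, hg⟩ := hx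
  have hsq : (g ^ 2)⁻¹ * x * (g ^ 2) = x := by
    have h2 : g⁻¹ * x⁻¹ * g = x := by
      have := congrArg Inv.inv hg
      simpa [mul_inv_rev, mul_assoc] using this
    calc (g ^ 2)⁻¹ * x * g ^ 2 = g⁻¹ * (g⁻¹ * x * g) * g := by rw [pow_two]; group
      _ = g⁻¹ * x⁻¹ * g := by rw [hg]
      _ = x := h2
  have heven : ∀ k : ℕ, (g ^ (2 * k))⁻¹ * x * g ^ (2 * k) = x := by
    intro k
    induction k with
    | zero => simp
    | succ k ih =>
      have hp : g ^ (2 * (k + 1)) = g ^ (2 * k) * g ^ 2 := by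
        rw [← pow_add]; ring_nf
      rw [hp]
      calc (g ^ (2 * k) * g ^ 2)⁻¹ * x * (g ^ (2 * k) * g ^ 2)
          = (g ^ 2)⁻¹ * ((g ^ (2 * k))⁻¹ * x * g ^ (2 * k)) * g ^ 2 := by group
        _ = (g ^ 2)⁻¹ * x * g ^ 2 := by rw [ih]
        _ = x := hsq
  set n := orderOf g with hn
  have hn0 : n ≠ 0 := (orderOf_pos g).ne'
  set m := n / 2 ^ n.factorization 2 with hm
  have hmdvd : m ∣ n := Nat.ordCompl_dvd n 2
  have hmodd : ¬ 2 ∣ m := Nat.not_dvd_ordCompl (by norm_num) hn0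
  have hodd : m % 2 = 1 := Nat.odd_iff.mp (Nat.odd_iff.mpr (by omega))
  refine ⟨g ^ m, ⟨n.factorization 2, ?_⟩, ?_⟩
  · rw [orderOf_pow, ← hn, Nat.gcd_eq_right hmdvd, hm,
      Nat.div_div_self (Nat.ordProj_dvd n 2) hn0]
  · have hk : m = 2 * (m / 2) + 1 := by omega
    rw [hk, pow_succ]
    calc (g ^ (2 * (m / 2)) * g)⁻¹ * x * (g ^ (2 * (m / 2)) * g)
        = g⁻¹ * ((g ^ (2 * (m / 2)))⁻¹ * x * g ^ (2 * (m / 2))) * g := by group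
      _ = g⁻¹ * x * g := by rw [heven]
      _ = x⁻¹ := hg
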